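/- Let T₁ and T₂ be disjoint finite sets, let r be a natural number with 1 ≤ r ≤ |T₁|, and let u : T₁ ∪ T₂ → ℝ be nonnegative. If for every subset Y ⊆ T₁ with |Y| = r one has ∑_{n ∈ T₂ ∪ Y} u(n) ≥ 1, then ∑_{n ∈ T₁} u(n) + (|T₁|/r) · ∑_{n ∈ T₂} u(n) ≥ |T₁|/r. -/

import Mathlib

open Finset

lemma count_mem_powersetCard {α : Type*} [DecidableEq α] (s : Finset α) (r : ℕ) (hr : 1 ≤ r)
    (a : α) (ha : a ∈ s) :
    ((s.powersetCard r).filter (fun Y => a ∈ Y)).card = (s.card - 1).choose (r - 1) := by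
  rw [← Finset.card_erase_of_mem ha, ← Finset.card_powersetCard]
  apply Finset.card_bij' (fun Y _ => Y.erase a) (fun Z _ => insert a Z)
  · intro Y hY
    simp only [mem_filter] at hY
    exact Finset.insert_erase hY.2
  · intro Z hZ
    simp only [mem_powersetCard] at hZ
    have haZ : a ∉ Z := fun hc => (Finset.mem_erase.mp (hZ.1 hc)).1 rfl
    exact Finset.erase_insert haZ
  · intro Y hY
    simp only [mem_filter, mem_powersetCard] at hY
    simp only [mem_powersetCard]
    constructor
    · exact Finset.erase_subset_erase a hY.1.1
    · rw [Finset.card_erase_of_mem hY.2, hY.1.2]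
  · intro Z hZ
    simp only [mem_powersetCard] at hZ
    simp only [mem_filter, mem_powersetCard]
    have haZ : a ∉ Z := fun hc => (Finset.mem_erase.mp (hZ.1 hc)).1 rfl
    refine ⟨⟨?_, ?_⟩, Finset.mem_insert_self a Z⟩
    · intro x hx
      rcases Finset.mem_insert.mp hx with h | h
      · exact h ▸ ha
      · exact Finset.erase_subset a s (hZ.1 h)
    · rw [Finset.card_insert_of_notMem haZ, hZ.2]
      omega

lemma sum_powersetCard_sum {α : Type*} [DecidableEq α] (s : Finset α) (r : ℕ) (hr : 1 ≤ r)
    (u : α → ℝ) :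
    ∑ Y ∈ s.powersetCard r, ∑ n ∈ Y, u n
      = ((s.card - 1).choose (r - 1) : ℝ) * ∑ n ∈ s, u n := by
  have h1 : ∀ Y ∈ s.powersetCard r, ∑ n ∈ Y, u n = ∑ n ∈ s, if n ∈ Y then u n else 0 := by
    intro Y hY
    rw [Finset.sum_ite_mem]
    congr 1
    exact (Finset.inter_eq_right.mpr (Finset.mem_powersetCard.mp hY).1).symm
  rw [Finset.sum_congr rfl h1, Finset.sum_comm]
  rw [Finset.mul_sum]
  apply Finset.sum_congr rfl
  intro n hn
  rw [Finset.sum_ite, Finset.sum_const_zero, add_zero, Finset.sum_const,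
    count_mem_powersetCard s r hr n hn, nsmul_eq_mul]

theorem stmt_4 {α : Type*} [DecidableEq α] (T₁ T₂ : Finset α) (hdisj : Disjoint T₁ T₂)
    (r : ℕ) (hr : 1 ≤ r) (hrT : r ≤ T₁.card)
    (u : α → ℝ) (hu : ∀ n ∈ T₁ ∪ T₂, 0 ≤ u n)
    (h : ∀ Y ⊆ T₁, Y.card = r → 1 ≤ ∑ n ∈ T₂ ∪ Y, u n) :
    (T₁.card : ℝ) / (r : ℝ) ≤
      ∑ n ∈ T₁, u n + ((T₁.card : ℝ) / (r : ℝ)) * ∑ n ∈ T₂, u n := by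
  set m := T₁.card with hm
  set S₁ := ∑ n ∈ T₁, u n with hS₁
  set S₂ := ∑ n ∈ T₂, u n with hS₂
  set C := (m.choose r : ℝ) with hC
  set D := ((m - 1).choose (r - 1) : ℝ) with hD
  -- each Y gives sum over T₂ ∪ Y = S₂ + ∑_Y
  have hsplit : ∀ Y ∈ T₁.powersetCard r, ∑ n ∈ T₂ ∪ Y, u n = S₂ + ∑ n ∈ Y, u n := by
    intro Y hY
    have hYs := (Finset.mem_powersetCard.mp hY).1
    rw [Finset.sum_union (Finset.disjoint_of_subset_right hYs hdisj.symm)]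
  have hkey : C ≤ C * S₂ + D * S₁ := by
    have h1 : (↑(T₁.powersetCard r).card : ℝ) * 1 ≤ ∑ Y ∈ T₁.powersetCard r, ∑ n ∈ T₂ ∪ Y, u n := by
      rw [mul_one]
      have := Finset.card_nsmul_le_sum (T₁.powersetCard r) (fun Y => ∑ n ∈ T₂ ∪ Y, u n) 1
        (fun Y hY => h Y (Finset.mem_powersetCard.mp hY).1 (Finset.mem_powersetCard.mp hY).2)
      simpa using this
    rw [Finset.sum_congr rfl hsplit, Finset.sum_add_distrib, Finset.sum_const,
      sum_powersetCard_sum _ _ hr, Finset.card_powersetCard, nsmul_eq_mul] at h1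
    simpa [hC, hD] using h1
  -- combinatorial identity: C * r = D * m
  have hid : C * r = D * m := by
    rw [hC, hD]
    rw [← Nat.cast_mul, ← Nat.cast_mul]
    congr 1
    have := Nat.add_one_mul_choose_eq (m - 1) (r - 1)
    have hm1 : m - 1 + 1 = m := by omega
    have hr1 : r - 1 + 1 = r := by omega
    rw [hm1, hr1] at this
    rw [← this, Nat.mul_comm]
  have hrpos : (0:ℝ) < r := by positivity
  have hDpos : (0:ℝ) < D := by
    rw [hD]
    have : 0 < (m - 1).choose (r - 1) := Nat.choose_pos (by omega)
    exact_mod_cast this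
  have hmr : (m:ℝ) / r = C / D := by
    rw [div_eq_div_iff hrpos.ne' hDpos.ne']
    linarith [hid]
  rw [hmr, div_le_iff₀ hDpos, add_mul]
  have h2 : C / D * S₂ * D = C * S₂ := by
    field_simp
  linarith [hkey, h2]
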